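/- Let Ω be a finite set and G ≤ Sym(Ω) an imprimitive Frobenius group. Then G is 2-closed, i.e., G = G^(2). -/

import Mathlib

section Prelude

variable {Ω : Type*}

/-- `G` is transitive on `Ω`. -/
def IsTransSub (G : Subgroup (Equiv.Perm Ω)) : Prop :=
  ∀ a b : Ω, ∃ g ∈ G, g a = b

/-- The orbit of `β` under the stabilizer of `α` in `G`. -/
def stabOrbit (G : Subgroup (Equiv.Perm Ω)) (α β : Ω) : Set Ω :=
  {γ : Ω | ∃ g ∈ G, g α = α ∧ g β = γ}

/-- `G` is `3/2`-transitive: transitive, and all orbits of a point stabilizer `G_α`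
on `Ω \ {α}` have the same size `m > 1`. -/
def IsThreeHalvesTrans (G : Subgroup (Equiv.Perm Ω)) : Prop :=
  IsTransSub G ∧ ∃ m : ℕ, 1 < m ∧ ∀ α β : Ω, β ≠ α → (stabOrbit G α β).ncard = m

/-- `G` is `2`-transitive. -/
def IsTwoTrans (G : Subgroup (Equiv.Perm Ω)) : Prop :=
  ∀ a b c d : Ω, a ≠ b → c ≠ d → ∃ g ∈ G, g a = c ∧ g b = d

/-- The partition (equivalence relation) `r` is preserved by `G`. -/
def IsGInvariantSetoid (G : Subgroup (Equiv.Perm Ω)) (r : Setoid Ω) : Prop :=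
  ∀ g ∈ G, ∀ a b : Ω, r a b → r (g a) (g b)

/-- `G` is primitive: transitive and the only `G`-invariant partitions of `Ω` are
the partition into singletons (`⊥`) and the one-class partition (`⊤`). -/
def IsPrimitiveSub (G : Subgroup (Equiv.Perm Ω)) : Prop :=
  IsTransSub G ∧ ∀ r : Setoid Ω, IsGInvariantSetoid G r → r = ⊥ ∨ r = ⊤

/-- `G` is a Frobenius group: transitive, point stabilizers are nontrivial, and
two-point stabilizers are trivial. -/
def IsFrobeniusSub (G : Subgroup (Equiv.Perm Ω)) : Prop :=
  IsTransSub G ∧ (∀ α : Ω, ∃ g ∈ G, g ≠ 1 ∧ g α = α) ∧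
    (∀ g ∈ G, ∀ α β : Ω, α ≠ β → g α = α → g β = β → g = 1)

/-- The `k`-closure of `G`: all permutations `σ` such that for every `k`-tuple `v`
there is `g ∈ G` agreeing with `σ` on `v`; it is the largest subgroup of `Sym(Ω)`
with the same orbits as `G` on `Ω^k`. -/
def kClosure (G : Subgroup (Equiv.Perm Ω)) (k : ℕ) : Subgroup (Equiv.Perm Ω) where
  carrier := {σ : Equiv.Perm Ω | ∀ v : Fin k → Ω, ∃ g ∈ G, ∀ i, σ (v i) = g (v i)}
  one_mem' := fun v => ⟨1, G.one_mem, fun _ => rfl⟩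
  mul_mem' := by
    intro a b ha hb v
    obtain ⟨g, hg, hgv⟩ := hb v
    obtain ⟨h, hh, hhv⟩ := ha fun i => b (v i)
    refine ⟨h * g, G.mul_mem hh hg, fun i => ?_⟩
    simp only [Equiv.Perm.mul_apply]
    rw [hhv i, hgv i]
  inv_mem' := by
    intro a ha v
    obtain ⟨g, hg, hgv⟩ := ha fun i => a⁻¹ (v i)
    refine ⟨g⁻¹, G.inv_mem hg, fun i => ?_⟩
    have h := hgv i
    rw [show a (a⁻¹ (v i)) = v i from a.apply_symm_apply (v i)] at h
    calc a⁻¹ (v i) = g⁻¹ (g (a⁻¹ (v i))) := by simp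
    _ = g⁻¹ (v i) := by rw [← h]

/-- `G` is an affine permutation group: it has a normal subgroup `V` which is an
elementary abelian `p`-group acting regularly on `Ω`. -/
def IsAffineSub (G : Subgroup (Equiv.Perm Ω)) : Prop :=
  ∃ p : ℕ, p.Prime ∧ ∃ V : Subgroup (Equiv.Perm Ω), V ≤ G ∧
    (∀ g ∈ G, ∀ v ∈ V, g * v * g⁻¹ ∈ V) ∧
    (∀ v ∈ V, ∀ w ∈ V, v * w = w * v) ∧
    (∀ v ∈ V, v ^ p = 1) ∧
    (∀ a b : Ω, ∃! v : Equiv.Perm Ω, v ∈ V ∧ v a = b)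

/-- `G` is almost simple: it has a nonabelian simple normal subgroup `S` whose
centralizer in `G` is trivial. -/
def IsAlmostSimpleSub (G : Subgroup (Equiv.Perm Ω)) : Prop :=
  ∃ S : Subgroup (Equiv.Perm Ω), S ≤ G ∧
    (∀ g ∈ G, ∀ s ∈ S, g * s * g⁻¹ ∈ S) ∧
    IsSimpleGroup S ∧ (∃ s ∈ S, ∃ t ∈ S, s * t ≠ t * s) ∧
    (∀ g ∈ G, (∀ s ∈ S, g * s = s * g) → g = 1)

/-- The conjugation homomorphism `Sym(α) → Sym(β)` induced by a bijection `e : α ≃ β`. -/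
def permConjHom {α β : Type*} (e : α ≃ β) : Equiv.Perm α →* Equiv.Perm β where
  toFun σ := e.permCongr σ
  map_one' := by ext x; simp
  map_mul' σ τ := by
    ext x
    simp [Equiv.Perm.mul_apply]

/-- The conjugate of `G ≤ Sym(α)` under a bijection `e : α ≃ β`. -/
def conjGroup {α β : Type*} (e : α ≃ β) (G : Subgroup (Equiv.Perm α)) :
    Subgroup (Equiv.Perm β) :=
  G.map (permConjHom e)

/-- The affine semilinear group `AΓL(1, p^d)` over a field `F` (of order `p^d`),
as a set of permutations: all maps `x ↦ a * x^(p^i) + b` with `a ≠ 0`, `0 ≤ i < d`. -/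
def AGammaL1Set (F : Type*) [Field F] (p d : ℕ) : Set (Equiv.Perm F) :=
  {σ : Equiv.Perm F | ∃ (a b : F) (i : ℕ), a ≠ 0 ∧ i < d ∧ ∀ x : F, σ x = a * x ^ p ^ i + b}

/-- The Passman group `AS₀` over a field `F` (of order `p^(d/2)`) with respect to
a generator `θ` of `Fˣ`: the subgroup of `Sym(F × F)` generated by all translations
together with `(x,y) ↦ (θx, θ⁻¹y)`, `(x,y) ↦ (-x, y)` and `(x,y) ↦ (y, x)`. -/
def PassmanGroup (F : Type*) [Field F] (θ : Fˣ) : Subgroup (Equiv.Perm (F × F)) :=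
  Subgroup.closure
    ({σ : Equiv.Perm (F × F) | ∃ u v : F, σ = (Equiv.addRight u).prodCongr (Equiv.addRight v)} ∪
      {(Equiv.mulLeft₀ (θ : F) θ.ne_zero).prodCongr
          (Equiv.mulLeft₀ ((θ⁻¹ : Fˣ) : F) θ⁻¹.ne_zero),
        (Equiv.neg F).prodCongr (Equiv.refl F),
        Equiv.prodComm F F})

/-- The socle of a group: the subgroup generated by all minimal normal subgroups. -/
def groupSocle (H : Type*) [Group H] : Subgroup H :=
  sSup {N : Subgroup H | N.Normal ∧ N ≠ ⊥ ∧
    ∀ M : Subgroup H, M.Normal → M ≠ ⊥ → M ≤ N → M = N}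

end Prelude
namespace ImprFrob

open Set

/-- Generic fiberwise counting: if all fibers of `f` on `A` have size `c`,
then `|A| = |f '' A| * c`. -/
lemma card_eq_card_image_mul {α β : Type*} (A : Set α) (hA : A.Finite) (f : α → β) (c : ℕ)
    (h : ∀ a ∈ A, {x ∈ A | f x = f a}.ncard = c) :
    A.ncard = (f '' A).ncard * c := by
  classical
  have key := Finset.card_eq_sum_card_fiberwise
    (f := f) (s := hA.toFinset) (t := hA.toFinset.image f)
    (fun x hx => Finset.mem_image_of_mem f hx)
  have h2 : (f '' A).ncard = (hA.toFinset.image f).card := by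
    rw [← Set.ncard_coe_finset]
    congr 1
    rw [Finset.coe_image, hA.coe_toFinset]
  have h3 : ∀ b ∈ hA.toFinset.image f,
      (hA.toFinset.filter (fun x => f x = b)).card = c := by
    intro b hb
    obtain ⟨a, ha, rfl⟩ := Finset.mem_image.mp hb
    have ha' : a ∈ A := hA.mem_toFinset.mp ha
    rw [← h a ha', ← Set.ncard_coe_finset]
    congr 1
    ext x
    simp [hA.mem_toFinset]
  calc A.ncard = hA.toFinset.card := Set.ncard_eq_toFinset_card _ hA
    _ = ∑ b ∈ hA.toFinset.image f, (hA.toFinset.filter (fun x => f x = b)).card := key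
    _ = ∑ _b ∈ hA.toFinset.image f, c := Finset.sum_congr rfl h3
    _ = (hA.toFinset.image f).card * c := by rw [Finset.sum_const, smul_eq_mul]
    _ = (f '' A).ncard * c := by rw [h2]

variable {Ω : Type*}

/-- The class of `x` under a setoid. -/
def cls (r : Setoid Ω) (x : Ω) : Set Ω := {y | r x y}

lemma mem_cls {r : Setoid Ω} {x y : Ω} : y ∈ cls r x ↔ r x y := Iff.rfl

lemma self_mem_cls {r : Setoid Ω} {x : Ω} : x ∈ cls r x := Setoid.refl x

lemma cls_eq_of_rel {r : Setoid Ω} {x y : Ω} (h : r x y) : cls r x = cls r y :=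
  Set.ext fun w => ⟨fun hw => Setoid.trans (Setoid.symm h) hw, fun hw => Setoid.trans h hw⟩

section Main

variable {G : Subgroup (Equiv.Perm Ω)} {r : Setoid Ω}

lemma mem_kClosure_of_mem {g : Equiv.Perm Ω} (hg : g ∈ G) : g ∈ kClosure G 2 :=
  fun _v => ⟨g, hg, fun _i => rfl⟩

lemma pair_of_mem_kClosure {σ : Equiv.Perm Ω} (hσ : σ ∈ kClosure G 2) (x y : Ω) :
    ∃ g ∈ G, σ x = g x ∧ σ y = g y := by
  obtain ⟨g, hg, h⟩ := hσ ![x, y]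
  exact ⟨g, hg, by simpa using h 0, by simpa using h 1⟩

lemma frob_unique (hF : IsFrobeniusSub G) {g g' : Equiv.Perm Ω} (hg : g ∈ G) (hg' : g' ∈ G)
    {x y : Ω} (hxy : x ≠ y) (h1 : g x = g' x) (h2 : g y = g' y) : g = g' := by
  have hx : (g'⁻¹ * g) x = x := by
    simp [Equiv.Perm.mul_apply, h1]
  have hy : (g'⁻¹ * g) y = y := by
    simp [Equiv.Perm.mul_apply, h2]
  have := hF.2.2 (g'⁻¹ * g) (G.mul_mem (G.inv_mem hg') hg) x y hxy hx hy
  have h := inv_mul_eq_one.mp this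
  exact h.symm

lemma kClosure_rel (hr : IsGInvariantSetoid G r) {σ : Equiv.Perm Ω}
    (hσ : σ ∈ kClosure G 2) {a b : Ω} (h : r a b) : r (σ a) (σ b) := by
  obtain ⟨g, hg, h1, h2⟩ := pair_of_mem_kClosure hσ a b
  rw [h1, h2]
  exact hr g hg a b h

lemma self_mem_stabOrbit {p z : Ω} : z ∈ stabOrbit G p z :=
  ⟨1, G.one_mem, by simp, by simp⟩

lemma stabOrbit_eq_of_mem {p z v : Ω} (hv : v ∈ stabOrbit G p z) :
    stabOrbit G p v = stabOrbit G p z := by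
  obtain ⟨g₀, hg₀, hg₀p, hg₀z⟩ := hv
  ext γ
  constructor
  · rintro ⟨g, hg, hgp, hgv⟩
    refine ⟨g * g₀, G.mul_mem hg hg₀, ?_, ?_⟩
    · simp [Equiv.Perm.mul_apply, hg₀p, hgp]
    · simp [Equiv.Perm.mul_apply, hg₀z, hgv]
  · rintro ⟨g, hg, hgp, hgz⟩
    refine ⟨g * g₀⁻¹, G.mul_mem hg (G.inv_mem hg₀), ?_, ?_⟩
    · have h0 : g₀⁻¹ p = p := Equiv.Perm.inv_eq_iff_eq.mpr hg₀p.symm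
      simp [Equiv.Perm.mul_apply, h0, hgp]
    · have h0 : g₀⁻¹ v = z := Equiv.Perm.inv_eq_iff_eq.mpr hg₀z.symm
      simp [Equiv.Perm.mul_apply, h0, hgz]

lemma kClosure_apply_mem_stabOrbit {σ : Equiv.Perm Ω} (hσ : σ ∈ kClosure G 2) {p : Ω}
    (hp : σ p = p) (z : Ω) : σ z ∈ stabOrbit G p z := by
  obtain ⟨g, hg, h1, h2⟩ := pair_of_mem_kClosure hσ p z
  exact ⟨g, hg, by rw [← h1, hp], h2.symm⟩

/-- The point stabilizer of `G` at `p`, as a set. -/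
def GpS (G : Subgroup (Equiv.Perm Ω)) (p : Ω) : Set (Equiv.Perm Ω) := {g | g ∈ G ∧ g p = p}

lemma stabOrbit_eq_image {p z : Ω} :
    stabOrbit G p z = (fun g : Equiv.Perm Ω => g z) '' GpS G p := by
  ext γ
  constructor
  · rintro ⟨g, hg, hgp, hgz⟩; exact ⟨g, ⟨hg, hgp⟩, hgz⟩
  · rintro ⟨g, ⟨hg, hgp⟩, hgz⟩; exact ⟨g, hg, hgp, hgz⟩

lemma ncard_stabOrbit [Finite Ω] (hF : IsFrobeniusSub G) {p z : Ω} (h : p ≠ z) :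
    (stabOrbit G p z).ncard = (GpS G p).ncard := by
  rw [stabOrbit_eq_image]
  exact Set.ncard_image_of_injOn fun g hg g' hg' hzz =>
    frob_unique hF hg.1 hg'.1 h (hg.2.trans hg'.2.symm) hzz

lemma g_image_cls (hr : IsGInvariantSetoid G r) {g : Equiv.Perm Ω} (hg : g ∈ G) (x : Ω) :
    (fun w => g w) '' cls r x = cls r (g x) := by
  ext w
  constructor
  · rintro ⟨y, hy, rfl⟩
    exact hr g hg x y hy
  · intro hw
    refine ⟨g⁻¹ w, ?_, by simp⟩
    have := hr g⁻¹ (G.inv_mem hg) (g x) w hw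
    simpa [mem_cls] using this

lemma cls_ncard_eq (hF : IsFrobeniusSub G) (hr : IsGInvariantSetoid G r) (x y : Ω) :
    (cls r x).ncard = (cls r y).ncard := by
  obtain ⟨g, hg, hgxy⟩ := hF.1 x y
  rw [← hgxy, ← g_image_cls hr hg x]
  exact (Set.ncard_image_of_injective _ g.injective).symm

end Main

end ImprFrob
namespace ImprFrob

open Set

variable {Ω : Type*} {G : Subgroup (Equiv.Perm Ω)} {r : Setoid Ω}

/-- Core lemma: if `σ` is in the 2-closure, fixes `p`, and maps `z` (not equivalent
to `p`) within its own block, then `σ` fixes `z`. -/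
lemma step1 [Finite Ω] (hF : IsFrobeniusSub G) (hr : IsGInvariantSetoid G r)
    {p z : Ω} (hpz : ¬ r p z) {σ : Equiv.Perm Ω} (hσ : σ ∈ kClosure G 2)
    (hp : σ p = p) (hz : r z (σ z)) : σ z = z := by
  classical
  have hwp : ∀ w ∈ cls r z, p ≠ w := by
    intro w hw h
    subst h
    exact hpz (Setoid.symm hw)
  have hZw : ∀ w ∈ cls r z, cls r w = cls r z := fun w hw => (cls_eq_of_rel hw).symm
  -- fibers of the class map on a stabilizer orbit
  have hfib : ∀ w ∈ cls r z, ∀ g : Equiv.Perm Ω, g ∈ G → g p = p →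
      {x ∈ stabOrbit G p w | cls r x = cls r (g w)} =
        (fun y => g y) '' (stabOrbit G p w ∩ cls r z) := by
    intro w hw g hg hgp
    ext v
    constructor
    · rintro ⟨hv, hcv⟩
      have hrv : r (g w) v := by
        have h0 : v ∈ cls r v := self_mem_cls
        rw [hcv] at h0
        exact h0
      refine ⟨g⁻¹ v, ⟨?_, ?_⟩, by simp⟩
      · have h1 : g⁻¹ v ∈ stabOrbit G p v :=
          ⟨g⁻¹, G.inv_mem hg, Equiv.Perm.inv_eq_iff_eq.mpr hgp.symm, rfl⟩
        rwa [stabOrbit_eq_of_mem hv] at h1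
      · have h2 := hr g⁻¹ (G.inv_mem hg) (g w) v hrv
        rw [Equiv.Perm.coe_inv, Equiv.symm_apply_apply] at h2
        rw [← hZw w hw]
        exact h2
    · rintro ⟨x, ⟨hx1, hx2⟩, rfl⟩
      constructor
      · have h1 : g x ∈ stabOrbit G p x := ⟨g, hg, hgp, rfl⟩
        rwa [stabOrbit_eq_of_mem hx1] at h1
      · have hwx : r x w := Setoid.trans (Setoid.symm hx2) hw
        exact cls_eq_of_rel (hr g hg x w hwx)
  -- each orbit has |GpS| elements, split into equal fibers
  have h5 : ∀ w ∈ cls r z, (GpS G p).ncard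
      = (cls r '' stabOrbit G p w).ncard * (stabOrbit G p w ∩ cls r z).ncard := by
    intro w hw
    have key := card_eq_card_image_mul (stabOrbit G p w) (Set.toFinite _) (cls r)
      ((stabOrbit G p w ∩ cls r z).ncard) ?_
    · rw [← key, ncard_stabOrbit hF (hwp w hw)]
    · rintro a ⟨g, hg, hgp, rfl⟩
      rw [hfib w hw g hg hgp]
      exact Set.ncard_image_of_injective _ g.injective
  -- the class images agree for all w in the block of z
  have hsub : ∀ w ∈ cls r z, ∀ w' ∈ cls r z,
      cls r '' stabOrbit G p w ⊆ cls r '' stabOrbit G p w' := by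
    rintro w hw w' hw' C ⟨v, ⟨g, hg, hgp, rfl⟩, rfl⟩
    exact ⟨g w', ⟨g, hg, hgp, rfl⟩,
      cls_eq_of_rel (hr g hg w' w (Setoid.trans (Setoid.symm hw') hw))⟩
  have hDpos : 0 < (cls r '' stabOrbit G p z).ncard := by
    rw [Set.ncard_pos (Set.toFinite _)]
    exact ⟨cls r z, z, self_mem_stabOrbit, rfl⟩
  have hzz : z ∈ cls r z := self_mem_cls
  -- intersection cardinalities are constant on the block
  have hcw : ∀ w ∈ cls r z,
      (stabOrbit G p w ∩ cls r z).ncard = (stabOrbit G p z ∩ cls r z).ncard := by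
    intro w hw
    have e1 := h5 w hw
    have e2 := h5 z hzz
    rw [Set.Subset.antisymm (hsub w hw z hzz) (hsub z hzz w hw)] at e1
    exact Nat.eq_of_mul_eq_mul_left hDpos (e1.symm.trans e2)
  -- c divides the block size
  have hcb : (cls r z).ncard
      = ((fun x => stabOrbit G p x) '' cls r z).ncard * (stabOrbit G p z ∩ cls r z).ncard := by
    refine card_eq_card_image_mul (cls r z) (Set.toFinite _) _ _ ?_
    intro w hw
    have hset : {x ∈ cls r z | stabOrbit G p x = stabOrbit G p w}
        = stabOrbit G p w ∩ cls r z := by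
      ext x
      constructor
      · rintro ⟨hx, he⟩
        exact ⟨he ▸ self_mem_stabOrbit, hx⟩
      · rintro ⟨hx1, hx2⟩
        exact ⟨hx2, stabOrbit_eq_of_mem hx1⟩
    rw [hset]
    exact hcw w hw
  -- |GpS| divides block size minus one
  have hmdvd : (GpS G p).ncard ∣ (cls r p).ncard - 1 := by
    have hOsub : ∀ y ∈ cls r p \ {p}, stabOrbit G p y ⊆ cls r p \ {p} := by
      rintro y hy v ⟨g, hg, hgp, rfl⟩
      constructor
      · have := hr g hg p y hy.1
        rwa [hgp] at this
      · intro hv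
        have h0 : g y = g p := by rw [hgp]; exact hv
        exact hy.2 (g.injective h0)
    have key := card_eq_card_image_mul (cls r p \ {p}) (Set.toFinite _)
      (fun x => stabOrbit G p x) ((GpS G p).ncard) ?_
    · rw [Set.ncard_diff_singleton_of_mem self_mem_cls] at key
      exact Dvd.intro_left _ key.symm
    · intro y hy
      have hset : {x ∈ cls r p \ {p} | stabOrbit G p x = stabOrbit G p y}
          = stabOrbit G p y := by
        ext x
        constructor
        · rintro ⟨hx, he⟩
          exact he ▸ self_mem_stabOrbit
        · intro hx
          exact ⟨hOsub y hy hx, stabOrbit_eq_of_mem hx⟩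
      rw [hset]
      exact ncard_stabOrbit hF (fun h => hy.2 h.symm)
  -- conclude c = 1
  have hc1 : (stabOrbit G p z ∩ cls r z).ncard = 1 := by
    have hbz : 0 < (cls r z).ncard := by
      rw [Set.ncard_pos (Set.toFinite _)]
      exact ⟨z, hzz⟩
    have hcbZ : (stabOrbit G p z ∩ cls r z).ncard ∣ (cls r z).ncard :=
      Dvd.intro_left _ hcb.symm
    have hcm : (stabOrbit G p z ∩ cls r z).ncard ∣ (GpS G p).ncard :=
      Dvd.intro_left _ (h5 z hzz).symm
    have heq : (cls r p).ncard = (cls r z).ncard := cls_ncard_eq hF hr p z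
    have hcb1 : (stabOrbit G p z ∩ cls r z).ncard ∣ (cls r z).ncard - 1 :=
      hcm.trans (heq ▸ hmdvd)
    have hd := Nat.dvd_sub hcbZ hcb1
    have h1 : (cls r z).ncard - ((cls r z).ncard - 1) = 1 := by omega
    rw [h1] at hd
    exact Nat.dvd_one.mp hd
  obtain ⟨a, ha⟩ := Set.ncard_eq_one.mp hc1
  have hz1 : z ∈ stabOrbit G p z ∩ cls r z := ⟨self_mem_stabOrbit, hzz⟩
  have hz2 : σ z ∈ stabOrbit G p z ∩ cls r z := ⟨kClosure_apply_mem_stabOrbit hσ hp z, hz⟩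
  rw [ha, Set.mem_singleton_iff] at hz1 hz2
  rw [hz2, hz1]

end ImprFrob
namespace ImprFrob

open Set

variable {Ω : Type*} {G : Subgroup (Equiv.Perm Ω)} {r : Setoid Ω}

lemma fixes_cls [Finite Ω] (hF : IsFrobeniusSub G) (hr : IsGInvariantSetoid G r)
    {p z : Ω} (hpz : ¬ r p z) {σ : Equiv.Perm Ω} (hσ : σ ∈ kClosure G 2)
    (hp : σ p = p) (hzf : σ z = z) : ∀ y, r z y → σ y = y := by
  intro y hy
  have h1 : ¬ r p y := fun h => hpz (Setoid.trans h (Setoid.symm hy))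
  have h2 : r y (σ y) := by
    have h3 := kClosure_rel hr hσ hy
    rw [hzf] at h3
    exact Setoid.trans (Setoid.symm hy) h3
  exact step1 hF hr h1 hσ hp h2

/-- The stabilizer of `p` in the 2-closure, as a set. -/
def XpS (G : Subgroup (Equiv.Perm Ω)) (p : Ω) : Set (Equiv.Perm Ω) :=
  {σ | σ ∈ kClosure G 2 ∧ σ p = p}

/-- The two-point stabilizer of `p, z` in the 2-closure, as a set. -/
def XpzS (G : Subgroup (Equiv.Perm Ω)) (p z : Ω) : Set (Equiv.Perm Ω) :=
  {σ | σ ∈ kClosure G 2 ∧ σ p = p ∧ σ z = z}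

lemma T1 [Finite Ω] (hF : IsFrobeniusSub G) {p z : Ω} (hpz : p ≠ z) :
    (XpS G p).ncard = (GpS G p).ncard * (XpzS G p z).ncard := by
  classical
  have himg : (fun σ : Equiv.Perm Ω => σ z) '' XpS G p = stabOrbit G p z := by
    ext v
    constructor
    · rintro ⟨σ, ⟨hσ, hσp⟩, rfl⟩
      exact kClosure_apply_mem_stabOrbit hσ hσp z
    · rintro ⟨g, hg, hgp, hgz⟩
      exact ⟨g, ⟨mem_kClosure_of_mem hg, hgp⟩, hgz⟩
  have key := card_eq_card_image_mul (XpS G p) (Set.toFinite _) (fun σ => σ z)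
    ((XpzS G p z).ncard) ?_
  · rw [himg, ncard_stabOrbit hF hpz] at key
    exact key
  · intro σ₀ hσ₀
    have hset : {x ∈ XpS G p | x z = σ₀ z} = (fun τ => σ₀ * τ) '' XpzS G p z := by
      ext σ
      constructor
      · rintro ⟨⟨hσ, hσp⟩, hσz⟩
        refine ⟨σ₀⁻¹ * σ, ⟨?_, ?_, ?_⟩, by simp [mul_assoc]⟩
        · exact mul_mem (inv_mem hσ₀.1) hσ
        · rw [Equiv.Perm.mul_apply, hσp]
          exact Equiv.Perm.inv_eq_iff_eq.mpr hσ₀.2.symm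
        · rw [Equiv.Perm.mul_apply, hσz, Equiv.Perm.coe_inv, Equiv.symm_apply_apply]
      · rintro ⟨τ, ⟨hτ, hτp, hτz⟩, rfl⟩
        refine ⟨⟨mul_mem hσ₀.1 hτ, ?_⟩, ?_⟩
        · rw [Equiv.Perm.mul_apply, hτp, hσ₀.2]
        · rw [Equiv.Perm.mul_apply, hτz]
    rw [hset]
    exact Set.ncard_image_of_injective _ (mul_right_injective σ₀)

lemma conj_inj (g : Equiv.Perm Ω) :
    Function.Injective (fun σ : Equiv.Perm Ω => g * σ * g⁻¹) := by
  intro a b h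
  simpa using mul_left_cancel (mul_right_cancel h)

lemma conj_XpzS {g : Equiv.Perm Ω} (hg : g ∈ G) (p z : Ω) :
    (fun σ : Equiv.Perm Ω => g * σ * g⁻¹) '' XpzS G p z = XpzS G (g p) (g z) := by
  ext τ
  constructor
  · rintro ⟨σ, ⟨hσ, hσp, hσz⟩, rfl⟩
    refine ⟨?_, ?_, ?_⟩
    · exact mul_mem (mul_mem (mem_kClosure_of_mem hg) hσ) (inv_mem (mem_kClosure_of_mem hg))
    · simp [Equiv.Perm.mul_apply, hσp]
    · simp [Equiv.Perm.mul_apply, hσz]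
  · rintro ⟨hτ, hτp, hτz⟩
    refine ⟨g⁻¹ * τ * g, ⟨?_, ?_, ?_⟩, ?_⟩
    · exact mul_mem (mul_mem (inv_mem (mem_kClosure_of_mem hg)) hτ)
        (mem_kClosure_of_mem hg)
    · simp [Equiv.Perm.mul_apply, hτp]
    · simp [Equiv.Perm.mul_apply, hτz]
    · group

lemma ncard_XpzS_const [Finite Ω] (hF : IsFrobeniusSub G) {p z p' z' : Ω}
    (h1 : p ≠ z) (h2 : p' ≠ z') :
    (XpzS G p z).ncard = (XpzS G p' z').ncard := by
  obtain ⟨g, hg, hgp⟩ := hF.1 p p'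
  have e1 : (XpzS G p z).ncard = (XpzS G p' (g z)).ncard := by
    rw [← hgp, ← conj_XpzS hg p z]
    exact (Set.ncard_image_of_injective _ (conj_inj g)).symm
  have hne : p' ≠ g z := by
    rw [← hgp]
    exact fun h => h1 (g.injective h)
  have t1 := T1 (G := G) hF hne
  have t2 := T1 (G := G) hF h2
  have hpos : 0 < (GpS G p').ncard := by
    rw [Set.ncard_pos (Set.toFinite _)]
    exact ⟨1, G.one_mem, by simp⟩
  rw [e1]
  exact Nat.eq_of_mul_eq_mul_left hpos (t1.symm.trans t2)

lemma exists_pair_of_ne_bot (hrb : r ≠ ⊥) : ∃ a b : Ω, r a b ∧ a ≠ b := by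
  by_contra h
  push_neg at h
  exact hrb (Setoid.ext fun x y =>
    ⟨fun hxy => h x y hxy, fun hxy => hxy ▸ Setoid.refl x⟩)

lemma fix2_same [Finite Ω] (hF : IsFrobeniusSub G) (hr : IsGInvariantSetoid G r)
    (hrt : r ≠ ⊤) {σ : Equiv.Perm Ω} (hσ : σ ∈ kClosure G 2)
    {α β : Ω} (hne : α ≠ β) (hab : r α β) (hα : σ α = α) (hβ : σ β = β) : σ = 1 := by
  have hfar : ∀ z, ¬ r α z → σ z = z := by
    intro z hz
    have hPQ : XpzS G α z ⊆ XpzS G α β := by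
      rintro τ ⟨hτ, hτα, hτz⟩
      exact ⟨hτ, hτα,
        fixes_cls hF hr (fun h => hz (Setoid.symm h)) hτ hτz hτα β hab⟩
    have hzα : α ≠ z := fun h => hz (h ▸ Setoid.refl α)
    have hcard : (XpzS G α β).ncard ≤ (XpzS G α z).ncard :=
      (ncard_XpzS_const hF hne hzα).le
    have heq := Set.eq_of_subset_of_ncard_le hPQ hcard
    have hmem : σ ∈ XpzS G α z := by
      rw [heq]
      exact ⟨hσ, hα, hβ⟩
    exact hmem.2.2
  have hex : ∃ z₁, ¬ r α z₁ := by
    by_contra h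
    push_neg at h
    exact hrt (Setoid.eq_top_iff.mpr fun x y => Setoid.trans (Setoid.symm (h x)) (h y))
  obtain ⟨z₁, hz₁⟩ := hex
  have hσz₁ := hfar z₁ hz₁
  have hnear : ∀ y, r α y → σ y = y :=
    fixes_cls hF hr (fun h => hz₁ (Setoid.symm h)) hσ hσz₁ hα
  ext x
  by_cases hx : r α x
  · simp [hnear x hx]
  · simp [hfar x hx]

lemma fix2 [Finite Ω] (hF : IsFrobeniusSub G) (hr : IsGInvariantSetoid G r)
    (hrt : r ≠ ⊤) (hrb : r ≠ ⊥) {σ : Equiv.Perm Ω} (hσ : σ ∈ kClosure G 2)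
    {α β : Ω} (hne : α ≠ β) (hα : σ α = α) (hβ : σ β = β) : σ = 1 := by
  by_cases hab : r α β
  · exact fix2_same hF hr hrt hσ hne hab hα hβ
  · have hnear : ∀ y, r α y → σ y = y :=
      fixes_cls hF hr (fun h => hab (Setoid.symm h)) hσ hβ hα
    obtain ⟨a, b, hrab, hneab⟩ := exists_pair_of_ne_bot hrb
    have h2 : 1 < (cls r α).ncard := by
      rw [cls_ncard_eq hF hr α a, Set.one_lt_ncard (Set.toFinite _)]
      exact ⟨a, self_mem_cls, b, hrab, hneab⟩
    obtain ⟨u, hu, hu'⟩ := Set.exists_ne_of_one_lt_ncard h2 α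
    exact fix2_same hF hr hrt hσ (fun h => hu' h.symm) hu hα (hnear u hu)

end ImprFrob
/-- An imprimitive Frobenius group is 2-closed. -/
theorem imprimitive_frobenius_twoClosed {Ω : Type*} [Fintype Ω]
    (G : Subgroup (Equiv.Perm Ω)) (hF : IsFrobeniusSub G)
    (himp : ¬IsPrimitiveSub G) :
    G = kClosure G 2 := by
  classical
  rw [IsPrimitiveSub] at himp
  push_neg at himp
  obtain ⟨r, hrinv, hrb, hrt⟩ := himp hF.1
  apply le_antisymm
  · intro g hg
    exact ImprFrob.mem_kClosure_of_mem hg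
  · intro σ hσ
    obtain ⟨a, b, hrab, hneab⟩ := ImprFrob.exists_pair_of_ne_bot hrb
    obtain ⟨g₁, hg₁, hg₁a⟩ := hF.1 a (σ a)
    have hτ : g₁⁻¹ * σ ∈ kClosure G 2 :=
      mul_mem (inv_mem (ImprFrob.mem_kClosure_of_mem hg₁)) hσ
    have hτa : (g₁⁻¹ * σ) a = a := by
      rw [Equiv.Perm.mul_apply, ← hg₁a, Equiv.Perm.coe_inv, Equiv.symm_apply_apply]
    obtain ⟨g₂, hg₂, h2a, h2b⟩ := ImprFrob.pair_of_mem_kClosure hτ a b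
    have hg₂a : g₂ a = a := by rw [← h2a, hτa]
    have hρ : g₂⁻¹ * (g₁⁻¹ * σ) ∈ kClosure G 2 :=
      mul_mem (inv_mem (ImprFrob.mem_kClosure_of_mem hg₂)) hτ
    have hρa : (g₂⁻¹ * (g₁⁻¹ * σ)) a = a := by
      rw [Equiv.Perm.mul_apply, hτa]
      exact Equiv.Perm.inv_eq_iff_eq.mpr hg₂a.symm
    have hρb : (g₂⁻¹ * (g₁⁻¹ * σ)) b = b := by
      rw [Equiv.Perm.mul_apply, h2b, Equiv.Perm.coe_inv, Equiv.symm_apply_apply]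
    have hρ1 : g₂⁻¹ * (g₁⁻¹ * σ) = 1 :=
      ImprFrob.fix2 hF hrinv hrt hrb hρ hneab hρa hρb
    have hσeq : σ = g₁ * g₂ := by
      have h := inv_mul_eq_one.mp hρ1
      rw [h]
      group
    rw [hσeq]
    exact G.mul_mem hg₁ hg₂
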